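/- Let A be a finite set and let A* denote the set of finite words over A, ordered by the embedding order ≤_e: u ≤_e v iff u can be obtained from v by cancelling some letters (i.e., u is a sublist/subsequence of v). Then (A*, ≤_e) has no descending chain and no antichain. -/

import Mathlib

/-- Theorem 2(1) (Higman): for a finite alphabet `A`, the set of words `A*` ordered by the
embedding (subsequence) order `≤ₑ` has no descending chain and no antichain. -/
theorem stmt_3 (A : Type*) [Fintype A] :
    (¬ ∃ a : ℕ → List A, ∀ i : ℕ, (a (i + 1)).Sublist (a i) ∧ a (i + 1) ≠ a i) ∧
    (¬ ∃ a : ℕ → List A, ∀ i j : ℕ, (a i).Sublist (a j) → i = j) := by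
  constructor
  · rintro ⟨a, ha⟩
    have hlt : ∀ i, (a (i + 1)).length < (a i).length := fun i => by
      rcases (ha i).1.length_le.lt_or_eq with h | h
      · exact h
      · exact absurd ((ha i).1.eq_of_length h) (ha i).2
    have key : ∀ i, (a i).length + i ≤ (a 0).length := by
      intro i
      induction i with
      | zero => simp
      | succ n ih => have := hlt n; omega
    have := key ((a 0).length + 1)
    omega
  · rintro ⟨a, ha⟩
    have hpwo : (Set.univ : Set A).PartiallyWellOrderedOn (· = ·) :=
      Set.finite_univ.partiallyWellOrderedOn
    have hl := hpwo.partiallyWellOrderedOn_sublistForall₂ (· = ·)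
    obtain ⟨i, j, hij, hsub⟩ := hl (fun n => ⟨a n, fun x _ => Set.mem_univ x⟩)
    obtain ⟨l, hall, hs⟩ := List.sublistForall₂_iff.1 hsub
    have heq : a i = l := by simpa using List.forall₂_eq_eq_eq ▸ hall
    exact absurd (ha i j (heq ▸ hs)) hij.ne
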